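/- Let a, b : ℕ → ℝ be sequences, 0 < h < k, λ > 0, with b_i = λ·a_i for all 0 < i < k, a_h ≠ 0 and b_k ≠ λ·a_k. Then (a_h − a_k)(b_{h+1} − b_{k−1}) ≠ (a_{h+1} − a_{k−1})(b_h − b_k) if and only if a_{h+1} ≠ a_{k−1} and h + 1 < k. -/
import Mathlib

theorem stmt_13 (a b : ℕ → ℝ)
    (h k : ℕ) (hh : 0 < h) (hhk : h < k) (l : ℝ) (hl : 0 < l)
    (hprop : ∀ i, 0 < i → i < k → b i = l * a i)
    (hah : a h ≠ 0) (hbk : b k ≠ l * a k) :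
    (a h - a k) * (b (h + 1) - b (k - 1)) ≠ (a (h + 1) - a (k - 1)) * (b h - b k) ↔
    (a (h + 1) ≠ a (k - 1) ∧ h + 1 < k) := by
  rcases eq_or_lt_of_le (Nat.succ_le_of_lt hhk) with hk1 | hk1
  · constructor
    · intro hne
      exfalso; apply hne
      have hk' : k - 1 = h := by omega
      rw [hk', ← hk1]
      ring
    · rintro ⟨_, h2⟩; omega
  · have hb1 : b (h+1) = l * a (h+1) := hprop _ (by omega) hk1
    have hb2 : b (k-1) = l * a (k-1) := hprop _ (by omega) (by omega)
    have hbh : b h = l * a h := hprop _ hh hhk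
    rw [hb1, hb2, hbh]
    constructor
    · intro hne
      refine ⟨fun heq => hne (by rw [heq]; ring), hk1⟩
    · rintro ⟨hne, -⟩ heq
      apply hbk
      have h0 : (a (h+1) - a (k-1)) * (l * a k - b k) = 0 := by
        linear_combination -heq
      rcases mul_eq_zero.1 h0 with h0 | h0
      · exact absurd (by linarith) hne
      · linarith
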